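/- Let v : ∂⁺B₁ → ℝ^d be absolutely continuous on the upper unit half-circle ∂⁺B₁ = {(cos θ, sin θ) : θ ∈ [0, π]} with v(1,0) ∈ N and v(-1,0) ∈ N, where N ⊂ ℝ^d is a compact set. Then for every x ∈ ∂⁺B₁, d_N(v(x))² ≤ (∫_{∂⁺B₁} y^a |∂_τ v|² dH¹)^{1/2} · (∫_{∂⁺B₁} y^{-a} d_N(v)² dH¹)^{1/2}, where a ∈ (0,1), y denotes the second coordinate, and ∂_τ is the tangential derivative. -/

import Mathlib

open MeasureTheory

private lemma amgm_aux {A u v : ℝ} (hA : 0 < A) :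
    2 * (u * v) ≤ A * u ^ 2 + A⁻¹ * v ^ 2 := by
  rw [← sub_nonneg]
  have h : A * u ^ 2 + A⁻¹ * v ^ 2 - 2 * (u * v) = (A * u - v) ^ 2 * A⁻¹ := by
    field_simp
    ring
  rw [h]
  positivity

private lemma key_half (α β : ℝ) (hab : α ≤ β) (g w : ℝ → ℝ)
    (hw : IntervalIntegrable w volume α β)
    (hw0 : ∀ θ, 0 ≤ w θ)
    (hg0 : ∀ θ ∈ Set.Icc α β, 0 ≤ g θ)
    (hgw : IntervalIntegrable (fun θ => g θ * w θ) volume α β)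
    (hlip : ∀ σ θ, α ≤ σ → σ ≤ θ → θ ≤ β → |g θ - g σ| ≤ ∫ t in σ..θ, w t)
    (hga : g α = 0) :
    g β ^ 2 ≤ 2 * ∫ θ in α..β, g θ * w θ := by
  have hI0 : 0 ≤ ∫ θ in α..β, g θ * w θ :=
    intervalIntegral.integral_nonneg hab fun x hx => mul_nonneg (hg0 x hx) (hw0 x)
  have hD0 : 0 ≤ g β := hg0 β ⟨hab, le_rfl⟩
  rcases eq_or_lt_of_le hD0 with h0 | hDpos
  · nlinarith
  set D := g β with hDdef
  -- helper : subinterval integrability of w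
  have hwm : ∀ σ θ, α ≤ σ → σ ≤ θ → θ ≤ β → IntervalIntegrable w volume σ θ := by
    intro σ θ h1 h2 h3
    refine hw.mono_set (Set.uIcc_subset_uIcc ?_ ?_) <;>
      rw [Set.uIcc_of_le hab]
    · exact ⟨h1, h2.trans h3⟩
    · exact ⟨h1.trans h2, h3⟩
  have hDH : D ≤ ∫ t in α..β, w t := by
    have h := hlip α β le_rfl hab le_rfl
    rw [hga, sub_zero, abs_of_nonneg hD0] at h
    exact h
  suffices hmain : ∀ ε, 0 < ε → ε < D → D ^ 2 ≤ 2 * (∫ θ in α..β, g θ * w θ) + 4 * D * ε by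
    refine le_of_forall_pos_le_add fun δ hδ => ?_
    set ε := min (δ / (4 * D)) (D / 2) with hεdef
    have hε : 0 < ε := lt_min (by positivity) (by positivity)
    have hεD : ε < D := (min_le_right _ _).trans_lt (by linarith)
    have h4 : 4 * D * ε ≤ δ := by
      have h5 : ε ≤ δ / (4 * D) := min_le_left _ _
      have h6 : 0 < 4 * D := by linarith
      calc 4 * D * ε ≤ 4 * D * (δ / (4 * D)) := by
            exact mul_le_mul_of_nonneg_left h5 h6.le
        _ = δ := by field_simp
    linarith [hmain ε hε hεD]
  intro ε hε hεD
  -- continuous approximation of w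
  have hwind : Integrable ((Set.Ioc α β).indicator w) volume :=
    (integrable_indicator_iff measurableSet_Ioc).2 hw.1
  obtain ⟨w₀, -, hw₀close, hw₀cont, hw₀int⟩ :=
    hwind.exists_hasCompactSupport_integral_sub_le hε
  set wc : ℝ → ℝ := fun x => max (w₀ x) 0 with hwc_def
  have hwc_cont : Continuous wc := hw₀cont.max continuous_const
  have hwc0 : ∀ x, 0 ≤ wc x := fun x => le_max_right _ _
  -- closeness
  have habs : ∀ σ θ, α ≤ σ → σ ≤ θ → θ ≤ β →
      IntervalIntegrable (fun t => |w t - wc t|) volume σ θ := by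
    intro σ θ h1 h2 h3
    exact ((hwm σ θ h1 h2 h3).sub (hwc_cont.intervalIntegrable _ _)).abs
  have hclose : (∫ t in α..β, |w t - wc t|) ≤ ε := by
    have hptw : ∀ x ∈ Set.Ioc α β, |w x - wc x| ≤ ‖(Set.Ioc α β).indicator w x - w₀ x‖ := by
      intro x hx
      rw [Set.indicator_of_mem hx, Real.norm_eq_abs]
      rcases le_or_gt 0 (w₀ x) with h | h
      · rw [show wc x = w₀ x from max_eq_left h]
      · rw [show wc x = 0 from max_eq_right h.le, sub_zero,
          abs_of_nonneg (hw0 x), abs_of_pos (by linarith [hw0 x] : 0 < w x - w₀ x)]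
        linarith
    have hint1 : IntegrableOn (fun t => |w t - wc t|) (Set.Ioc α β) volume :=
      ((habs α β le_rfl hab le_rfl).1)
    have hint2 : IntegrableOn (fun x => ‖(Set.Ioc α β).indicator w x - w₀ x‖)
        (Set.Ioc α β) volume := ((hwind.sub hw₀int).norm).integrableOn
    calc (∫ t in α..β, |w t - wc t|)
        = ∫ t in Set.Ioc α β, |w t - wc t| := intervalIntegral.integral_of_le hab
      _ ≤ ∫ t in Set.Ioc α β, ‖(Set.Ioc α β).indicator w t - w₀ t‖ :=
          setIntegral_mono_on hint1 hint2 measurableSet_Ioc hptw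
      _ ≤ ∫ t, ‖(Set.Ioc α β).indicator w t - w₀ t‖ :=
          setIntegral_le_integral (hwind.sub hw₀int).norm
            (Filter.Eventually.of_forall fun x => norm_nonneg _)
      _ ≤ ε := hw₀close
  have hcloseSub : ∀ σ θ, α ≤ σ → σ ≤ θ → θ ≤ β → (∫ t in σ..θ, |w t - wc t|) ≤ ε := by
    intro σ θ h1 h2 h3
    refine le_trans ?_ hclose
    exact intervalIntegral.integral_mono_interval h1 h2 h3
      (Filter.Eventually.of_forall fun x => abs_nonneg _) (habs α β le_rfl hab le_rfl)
  -- w and wc integrals are close on subintervals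
  have hwcless : ∀ σ θ, α ≤ σ → σ ≤ θ → θ ≤ β →
      (∫ t in σ..θ, w t) - ε ≤ ∫ t in σ..θ, wc t := by
    intro σ θ h1 h2 h3
    have h4 : (∫ t in σ..θ, (w t - wc t)) ≤ ∫ t in σ..θ, |w t - wc t| :=
      intervalIntegral.integral_mono_on h2
        ((hwm σ θ h1 h2 h3).sub (hwc_cont.intervalIntegrable _ _))
        (habs σ θ h1 h2 h3) (fun x _ => le_abs_self _)
    rw [intervalIntegral.integral_sub (hwm σ θ h1 h2 h3)
      (hwc_cont.intervalIntegrable _ _)] at h4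
    linarith [hcloseSub σ θ h1 h2 h3]
  -- the primitive of wc
  set P : ℝ → ℝ := fun θ => ∫ t in α..θ, wc t with hP_def
  have hP : ∀ θ, HasDerivAt P (wc θ) θ := fun θ =>
    intervalIntegral.integral_hasDerivAt_right (hwc_cont.intervalIntegrable α θ)
      (hwc_cont.stronglyMeasurable.stronglyMeasurableAtFilter) hwc_cont.continuousAt
  set ψ : ℝ → ℝ := fun θ => D - ε - P β + P θ with hψ_def
  have hψd : ∀ θ, HasDerivAt ψ (wc θ) θ := fun θ => (hP θ).const_add (D - ε - P β)
  have hψcont : Continuous ψ := continuous_iff_continuousAt.2 fun θ => (hψd θ).continuousAt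
  have hψeq : ∀ θ, ψ θ = D - ε - ∫ t in θ..β, wc t := by
    intro θ
    have h := intervalIntegral.integral_add_adjacent_intervals
      (hwc_cont.intervalIntegrable (μ := volume) α θ)
      (hwc_cont.intervalIntegrable (μ := volume) θ β)
    simp only [hψ_def, hP_def]
    linarith
  have hψle : ∀ θ, θ ≤ β → ψ θ ≤ D - ε := by
    intro θ hθ
    rw [hψeq]
    have h : 0 ≤ ∫ t in θ..β, wc t :=
      intervalIntegral.integral_nonneg hθ fun x _ => hwc0 x
    linarith
  have hψg : ∀ θ ∈ Set.Icc α β, ψ θ ≤ g θ := by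
    intro θ hθ
    rw [hψeq]
    have h1 : D - g θ ≤ ∫ t in θ..β, w t :=
      calc D - g θ = g β - g θ := by rw [hDdef]
        _ ≤ |g β - g θ| := le_abs_self _
        _ ≤ ∫ t in θ..β, w t := hlip θ β hθ.1 hθ.2 le_rfl
    have h2 := hwcless θ β hθ.1 hθ.2 le_rfl
    linarith
  have hψα : ψ α ≤ 0 := by
    have := hψg α ⟨le_rfl, hab⟩
    rw [hga] at this
    exact this
  -- Φ and FTC
  set Φ : ℝ → ℝ := fun u => ∫ t in (0:ℝ)..u, max t 0 with hΦ_def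
  have hmaxc : Continuous (fun t : ℝ => max t 0) := continuous_id.max continuous_const
  have hΦd : ∀ u, HasDerivAt Φ (max u 0) u := fun u =>
    intervalIntegral.integral_hasDerivAt_right (hmaxc.intervalIntegrable _ _)
      (hmaxc.stronglyMeasurable.stronglyMeasurableAtFilter) hmaxc.continuousAt
  have hΦnonpos : ∀ u, u ≤ 0 → Φ u = 0 := by
    intro u hu
    have hcongr : Set.EqOn (fun t : ℝ => max t 0) (fun _ => (0:ℝ)) (Set.uIcc 0 u) := by
      intro t ht
      have h1 : t ≤ 0 := le_trans ht.2 (by simp [hu])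
      simp [max_eq_right h1]
    simp only [hΦ_def]
    rw [intervalIntegral.integral_congr hcongr]
    simp
  have hΦpos : ∀ u, 0 ≤ u → Φ u = u ^ 2 / 2 := by
    intro u hu
    have hcongr : Set.EqOn (fun t : ℝ => max t 0) (fun t => t) (Set.uIcc 0 u) := by
      intro t ht
      have h1 : (0:ℝ) ≤ t := le_trans (by simp [hu]) ht.1
      simp [max_eq_left h1]
    simp only [hΦ_def]
    rw [intervalIntegral.integral_congr hcongr, integral_id]
    ring
  have hintwc : IntervalIntegrable (fun θ => max (ψ θ) 0 * wc θ) volume α β :=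
    ((hψcont.max continuous_const).mul hwc_cont).intervalIntegrable _ _
  have hFTC : (∫ θ in α..β, max (ψ θ) 0 * wc θ) = Φ (ψ β) - Φ (ψ α) :=
    intervalIntegral.integral_eq_sub_of_hasDerivAt
      (fun θ _ => (hΦd (ψ θ)).comp θ (hψd θ)) hintwc
  have hψβ : ψ β = D - ε := by
    rw [hψeq, intervalIntegral.integral_same]
    ring
  have hval : (∫ θ in α..β, max (ψ θ) 0 * wc θ) = (D - ε) ^ 2 / 2 := by
    rw [hFTC, hψβ, hΦpos _ (by linarith), hΦnonpos _ hψα]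
    ring
  -- comparison
  have hmaxle : ∀ θ ∈ Set.Icc α β, max (ψ θ) 0 ≤ g θ :=
    fun θ hθ => max_le (hψg θ hθ) (hg0 θ hθ)
  have hmaxD : ∀ θ ∈ Set.Icc α β, max (ψ θ) 0 ≤ D :=
    fun θ hθ => max_le (by linarith [hψle θ hθ.2]) hD0
  have hint1 : IntervalIntegrable (fun θ => max (ψ θ) 0 * w θ) volume α β :=
    hw.continuousOn_mul (hψcont.max continuous_const).continuousOn
  have step1 : (∫ θ in α..β, max (ψ θ) 0 * w θ) ≤ ∫ θ in α..β, g θ * w θ :=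
    intervalIntegral.integral_mono_on hab hint1 hgw
      (fun x hx => mul_le_mul_of_nonneg_right (hmaxle x hx) (hw0 x))
  have step2 : (D - ε) ^ 2 / 2 - D * ε ≤ ∫ θ in α..β, max (ψ θ) 0 * w θ := by
    have hptw : ∀ x ∈ Set.Icc α β,
        max (ψ x) 0 * wc x - max (ψ x) 0 * w x ≤ D * |w x - wc x| := by
      intro x hx
      have h1 : max (ψ x) 0 * wc x - max (ψ x) 0 * w x = max (ψ x) 0 * (wc x - w x) := by
        ring
      rw [h1]
      calc max (ψ x) 0 * (wc x - w x) ≤ max (ψ x) 0 * |wc x - w x| :=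
            mul_le_mul_of_nonneg_left (le_abs_self _) (le_max_right _ _)
        _ ≤ D * |wc x - w x| := mul_le_mul_of_nonneg_right (hmaxD x hx) (abs_nonneg _)
        _ = D * |w x - wc x| := by rw [abs_sub_comm]
    have hdiff : (∫ θ in α..β, max (ψ θ) 0 * wc θ) - (∫ θ in α..β, max (ψ θ) 0 * w θ)
        ≤ D * ε := by
      rw [← intervalIntegral.integral_sub hintwc hint1]
      calc (∫ θ in α..β, (max (ψ θ) 0 * wc θ - max (ψ θ) 0 * w θ))
          ≤ ∫ θ in α..β, D * |w θ - wc θ| :=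
            intervalIntegral.integral_mono_on hab (hintwc.sub hint1)
              ((habs α β le_rfl hab le_rfl).const_mul D) hptw
        _ = D * ∫ θ in α..β, |w θ - wc θ| := intervalIntegral.integral_const_mul _ _
        _ ≤ D * ε := mul_le_mul_of_nonneg_left hclose hD0
    linarith [hval]
  have hfin : (D - ε) ^ 2 / 2 - D * ε ≤ ∫ θ in α..β, g θ * w θ := le_trans step2 step1
  nlinarith [sq_nonneg ε]

private lemma key_half' (α β : ℝ) (hab : α ≤ β) (g w : ℝ → ℝ)
    (hw : IntervalIntegrable w volume α β)
    (hw0 : ∀ θ, 0 ≤ w θ)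
    (hg0 : ∀ θ ∈ Set.Icc α β, 0 ≤ g θ)
    (hgw : IntervalIntegrable (fun θ => g θ * w θ) volume α β)
    (hlip : ∀ σ θ, α ≤ σ → σ ≤ θ → θ ≤ β → |g θ - g σ| ≤ ∫ t in σ..θ, w t)
    (hgb : g β = 0) :
    g α ^ 2 ≤ 2 * ∫ θ in α..β, g θ * w θ := by
  set c := α + β with hc
  have e1 : c - β = α := by rw [hc]; ring
  have e2 : c - α = β := by rw [hc]; ring
  have hw' : IntervalIntegrable (fun x => w (c - x)) volume α β := by
    have := (hw.comp_sub_left c).symm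
    rwa [e1, e2] at this
  have hgw' : IntervalIntegrable (fun x => g (c - x) * w (c - x)) volume α β := by
    have := ((hgw.comp_sub_left c).symm)
    rwa [e1, e2] at this
  have h1 := key_half α β hab (fun θ => g (c - θ)) (fun θ => w (c - θ)) hw'
    (fun θ => hw0 _)
    (fun θ hθ => hg0 (c - θ) ⟨by simp only [hc]; linarith [hθ.2], by simp only [hc]; linarith [hθ.1]⟩)
    hgw'
    (by
      intro σ θ h1 h2 h3
      have h := hlip (c - θ) (c - σ) (by simp only [hc]; linarith)
        (by linarith) (by simp only [hc]; linarith)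
      rw [abs_sub_comm] at h
      have h4 : (∫ t in σ..θ, w (c - t)) = ∫ t in c - θ..c - σ, w t :=
        intervalIntegral.integral_comp_sub_left w c
      rw [h4]
      exact h)
    (by show g (c - α) = 0; rw [e2]; exact hgb)
  have h1' : g (c - β) ^ 2 ≤ 2 * ∫ θ in α..β, g (c - θ) * w (c - θ) := h1
  rw [e1] at h1'
  have h2 : (∫ θ in α..β, g (c - θ) * w (c - θ)) = ∫ θ in (c - β)..(c - α), g θ * w θ :=
    intervalIntegral.integral_comp_sub_left (fun t => g t * w t) c
  rw [e1, e2] at h2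
  rw [h2] at h1'
  exact h1'

theorem dist_sq_on_half_circle {d : ℕ} (N : Set (EuclideanSpace ℝ (Fin d)))
    (hNc : IsCompact N) (hNne : N.Nonempty)
    (a : ℝ) (ha : a ∈ Set.Ioo (0 : ℝ) 1)
    (v v' : ℝ → EuclideanSpace ℝ (Fin d))
    (hint : IntervalIntegrable v' volume 0 Real.pi)
    (hAC : ∀ θ ∈ Set.Icc (0 : ℝ) Real.pi, v θ = v 0 + ∫ t in (0:ℝ)..θ, v' t)
    (h0 : v 0 ∈ N) (hπ : v Real.pi ∈ N)
    (hI1 : IntervalIntegrable (fun θ => (Real.sin θ) ^ a * ‖v' θ‖ ^ 2) volume 0 Real.pi)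
    (hI2 : IntervalIntegrable
      (fun θ => (Real.sin θ) ^ (-a) * (Metric.infDist (v θ) N) ^ 2) volume 0 Real.pi) :
    ∀ θ₀ ∈ Set.Icc (0 : ℝ) Real.pi,
      (Metric.infDist (v θ₀) N) ^ 2 ≤
        Real.sqrt (∫ θ in (0:ℝ)..Real.pi, (Real.sin θ) ^ a * ‖v' θ‖ ^ 2) *
        Real.sqrt (∫ θ in (0:ℝ)..Real.pi,
          (Real.sin θ) ^ (-a) * (Metric.infDist (v θ) N) ^ 2) := by
  intro θ₀ hθ₀
  obtain ⟨h0θ, hθπ⟩ := hθ₀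
  have hπ0 : (0:ℝ) ≤ Real.pi := Real.pi_pos.le
  set g : ℝ → ℝ := fun θ => Metric.infDist (v θ) N with hg_def
  set w : ℝ → ℝ := fun θ => ‖v' θ‖ with hw_def
  have hw : IntervalIntegrable w volume 0 Real.pi := hint.norm
  have hsubm : ∀ σ θ, 0 ≤ σ → σ ≤ θ → θ ≤ Real.pi →
      Set.uIcc σ θ ⊆ Set.uIcc 0 Real.pi := by
    intro σ θ h1 h2 h3
    refine Set.uIcc_subset_uIcc ?_ ?_ <;> rw [Set.uIcc_of_le hπ0]
    · exact ⟨h1, h2.trans h3⟩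
    · exact ⟨h1.trans h2, h3⟩
  have hvdiff : ∀ σ θ, 0 ≤ σ → σ ≤ θ → θ ≤ Real.pi →
      v θ - v σ = ∫ t in σ..θ, v' t := by
    intro σ θ h1 h2 h3
    have hadj := intervalIntegral.integral_add_adjacent_intervals
      (hint.mono_set (hsubm 0 σ le_rfl h1 (h2.trans h3)))
      (hint.mono_set (hsubm σ θ h1 h2 h3))
    rw [hAC θ ⟨h1.trans h2, h3⟩, hAC σ ⟨h1, h2.trans h3⟩, ← hadj]
    abel
  have hlip : ∀ σ θ, 0 ≤ σ → σ ≤ θ → θ ≤ Real.pi →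
      |g θ - g σ| ≤ ∫ t in σ..θ, w t := by
    intro σ θ h1 h2 h3
    have hd : dist (v θ) (v σ) ≤ ∫ t in σ..θ, w t := by
      rw [dist_eq_norm, hvdiff σ θ h1 h2 h3]
      exact intervalIntegral.norm_integral_le_integral_norm h2
    have l1 : g θ ≤ g σ + dist (v θ) (v σ) := Metric.infDist_le_infDist_add_dist
    have l2 : g σ ≤ g θ + dist (v σ) (v θ) := Metric.infDist_le_infDist_add_dist
    rw [dist_comm (v σ) (v θ)] at l2
    rw [abs_sub_le_iff]
    constructor <;> linarith
  have hVcont : ContinuousOn v (Set.Icc 0 Real.pi) := by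
    have hprim : ContinuousOn (fun θ => v 0 + ∫ t in (0:ℝ)..θ, v' t) (Set.Icc 0 Real.pi) := by
      have h := intervalIntegral.continuousOn_primitive_interval' hint Set.left_mem_uIcc
      rw [Set.uIcc_of_le hπ0] at h
      exact continuousOn_const.add h
    exact hprim.congr fun θ hθ => hAC θ hθ
  have hgcont : ContinuousOn g (Set.Icc 0 Real.pi) :=
    (Metric.continuous_infDist_pt N).comp_continuousOn hVcont
  have hgw : IntervalIntegrable (fun θ => g θ * w θ) volume 0 Real.pi := by
    refine hw.continuousOn_mul ?_
    rw [Set.uIcc_of_le hπ0]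
    exact hgcont
  have hg0 : ∀ θ, 0 ≤ g θ := fun θ => Metric.infDist_nonneg
  have hgz0 : g 0 = 0 := Metric.infDist_zero_of_mem h0
  have hgzπ : g Real.pi = 0 := Metric.infDist_zero_of_mem hπ
  have A1 : g θ₀ ^ 2 ≤ 2 * ∫ θ in (0:ℝ)..θ₀, g θ * w θ :=
    key_half 0 θ₀ h0θ g w (hw.mono_set (hsubm 0 θ₀ le_rfl h0θ hθπ))
      (fun θ => norm_nonneg _) (fun θ _ => hg0 θ)
      (hgw.mono_set (hsubm 0 θ₀ le_rfl h0θ hθπ))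
      (fun σ θ hσ hσθ hθ => hlip σ θ hσ hσθ (hθ.trans hθπ)) hgz0
  have A2 : g θ₀ ^ 2 ≤ 2 * ∫ θ in θ₀..Real.pi, g θ * w θ :=
    key_half' θ₀ Real.pi hθπ g w (hw.mono_set (hsubm θ₀ Real.pi h0θ hθπ le_rfl))
      (fun θ => norm_nonneg _) (fun θ hθ => hg0 θ)
      (hgw.mono_set (hsubm θ₀ Real.pi h0θ hθπ le_rfl))
      (fun σ θ hσ hσθ hθ => hlip σ θ (h0θ.trans hσ) hσθ hθ) hgzπ
  have hIsplit : (∫ θ in (0:ℝ)..θ₀, g θ * w θ) + (∫ θ in θ₀..Real.pi, g θ * w θ)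
      = ∫ θ in (0:ℝ)..Real.pi, g θ * w θ :=
    intervalIntegral.integral_add_adjacent_intervals
      (hgw.mono_set (hsubm 0 θ₀ le_rfl h0θ hθπ)) (hgw.mono_set (hsubm θ₀ Real.pi h0θ hθπ le_rfl))
  have hDI : g θ₀ ^ 2 ≤ ∫ θ in (0:ℝ)..Real.pi, g θ * w θ := by linarith
  -- Cauchy-Schwarz via quadratic
  set X := ∫ θ in (0:ℝ)..Real.pi, (Real.sin θ) ^ a * w θ ^ 2 with hX_def
  set Y := ∫ θ in (0:ℝ)..Real.pi, (Real.sin θ) ^ (-a) * g θ ^ 2 with hY_def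
  have hI1' : IntervalIntegrable (fun θ => (Real.sin θ) ^ a * w θ ^ 2) volume 0 Real.pi := hI1
  have hI2' : IntervalIntegrable (fun θ => (Real.sin θ) ^ (-a) * g θ ^ 2) volume 0 Real.pi := hI2
  have hX0 : 0 ≤ X :=
    intervalIntegral.integral_nonneg hπ0 fun x hx =>
      mul_nonneg (Real.rpow_nonneg (Real.sin_nonneg_of_nonneg_of_le_pi hx.1 hx.2) a)
        (sq_nonneg _)
  have hY0 : 0 ≤ Y :=
    intervalIntegral.integral_nonneg hπ0 fun x hx =>
      mul_nonneg (Real.rpow_nonneg (Real.sin_nonneg_of_nonneg_of_le_pi hx.1 hx.2) (-a))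
        (sq_nonneg _)
  have haeIoo : ∀ᵐ x ∂(volume.restrict (Set.Icc (0:ℝ) Real.pi)),
      x ∈ Set.Ioo (0:ℝ) Real.pi := by
    have h1 : (volume : Measure ℝ) ({0, Real.pi} : Set ℝ) = 0 := by
      rw [Set.insert_eq]
      exact measure_union_null (measure_singleton _) (measure_singleton _)
    refine (ae_restrict_iff' measurableSet_Icc).2 ?_
    filter_upwards [measure_eq_zero_iff_ae_notMem.1 h1] with x hx hxIcc
    simp only [Set.mem_insert_iff, Set.mem_singleton_iff, not_or] at hx
    exact ⟨lt_of_le_of_ne hxIcc.1 (Ne.symm hx.1), lt_of_le_of_ne hxIcc.2 hx.2⟩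
  have hlam : ∀ lam : ℝ, 0 < lam → 2 * (g θ₀) ^ 2 ≤ lam * X + lam⁻¹ * Y := by
    intro lam hl
    have hrhsInt : IntervalIntegrable
        (fun θ => lam * ((Real.sin θ) ^ a * w θ ^ 2) + lam⁻¹ * ((Real.sin θ) ^ (-a) * g θ ^ 2))
        volume 0 Real.pi := (hI1'.const_mul lam).add (hI2'.const_mul lam⁻¹)
    have hlhsInt : IntervalIntegrable (fun θ => 2 * (g θ * w θ)) volume 0 Real.pi :=
      hgw.const_mul 2
    have hptwise : ∀ᵐ x ∂(volume.restrict (Set.Icc (0:ℝ) Real.pi)),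
        2 * (g x * w x) ≤
          lam * ((Real.sin x) ^ a * w x ^ 2) + lam⁻¹ * ((Real.sin x) ^ (-a) * g x ^ 2) := by
      filter_upwards [haeIoo] with x hx
      have hs : 0 < Real.sin x := Real.sin_pos_of_pos_of_lt_pi hx.1 hx.2
      have ht : 0 < Real.sin x ^ a := Real.rpow_pos_of_pos hs a
      have hneg : Real.sin x ^ (-a) = (Real.sin x ^ a)⁻¹ := Real.rpow_neg hs.le a
      rw [hneg]
      have hA : 0 < lam * Real.sin x ^ a := mul_pos hl ht
      have hkey := amgm_aux (u := w x) (v := g x) hA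
      rw [mul_inv] at hkey
      calc 2 * (g x * w x) = 2 * (w x * g x) := by ring
        _ ≤ lam * Real.sin x ^ a * w x ^ 2 + lam⁻¹ * (Real.sin x ^ a)⁻¹ * g x ^ 2 := hkey
        _ = lam * (Real.sin x ^ a * w x ^ 2) + lam⁻¹ * ((Real.sin x ^ a)⁻¹ * g x ^ 2) := by
            ring
    have hmono := intervalIntegral.integral_mono_ae_restrict hπ0 hlhsInt hrhsInt hptwise
    rw [intervalIntegral.integral_add (hI1'.const_mul lam) (hI2'.const_mul lam⁻¹),
      intervalIntegral.integral_const_mul, intervalIntegral.integral_const_mul,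
      intervalIntegral.integral_const_mul] at hmono
    rw [← hX_def, ← hY_def] at hmono
    nlinarith [hDI]
  have hquad : ∀ lam : ℝ, 0 ≤ X * (lam * lam) + (-(2 * (g θ₀) ^ 2)) * lam + Y := by
    intro lam
    rcases le_or_gt lam 0 with h | h
    · have t1 : 0 ≤ X * (lam * lam) := mul_nonneg hX0 (mul_self_nonneg _)
      have t2 : 0 ≤ -(2 * (g θ₀) ^ 2) * lam := by nlinarith [sq_nonneg (g θ₀)]
      linarith
    · have h1 := hlam lam h
      have h2 := mul_le_mul_of_nonneg_left h1 h.le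
      have h3 : lam * (lam * X + lam⁻¹ * Y) = X * (lam * lam) + Y := by
        field_simp
      rw [h3] at h2
      nlinarith
  have hdisc := discrim_le_zero hquad
  rw [discrim] at hdisc
  have hXY : ((g θ₀) ^ 2) ^ 2 ≤ X * Y := by nlinarith
  have hfin : Real.sqrt (((g θ₀) ^ 2) ^ 2) ≤ Real.sqrt (X * Y) := Real.sqrt_le_sqrt hXY
  rw [Real.sqrt_sq (sq_nonneg _), Real.sqrt_mul hX0] at hfin
  exact hfin
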